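/- Let n ≥ 1 and let W_n be the n-uplinked mutual dyad. Then the reduced path homology of W_n over any field vanishes in every dimension p ≥ 0 with p ≠ 2; that is, β̃_0(W_n) = β̃_1(W_n) = 0 and β̃_p(W_n) = 0 for all p ≥ 3. -/

import Mathlib

open Finset

/-- The non-regular boundary operator `∂_[p] : R^{V^{p+1}} → R^{V^p}`.
It is the linear map acting on the standard basis by
`∂_[p] e_{(v_0,…,v_p)} = ∑_{j=0}^p (−1)^j e_{(v_0,…,v̂_j,…,v_p)}`,
where `v̂_j` means that the entry `v_j` is omitted from the tuple
(here `fun i => x (j.succAbove i)` is the tuple `x` with its `j`-th entry dropped). -/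
noncomputable def pathBoundary (R V : Type) [CommRing R] [Fintype V] [DecidableEq V]
    (p : ℕ) : ((Fin (p + 1) → V) → R) →ₗ[R] ((Fin p → V) → R) where
  toFun f := fun w => ∑ x : Fin (p + 1) → V,
    (∑ j : Fin (p + 1), (-1 : R) ^ (j : ℕ) *
      (if (fun i => x (j.succAbove i)) = w then 1 else 0)) * f x
  map_add' f g := by
    funext w
    simp [mul_add, Finset.sum_add_distrib]
  map_smul' r f := by
    funext w
    simp [Finset.mul_sum, mul_left_comm]

/-- A tuple of vertices is an allowed path when each consecutive pair is an arc. -/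
def IsAllowed {V : Type} (A : V → V → Prop) {q : ℕ} (x : Fin q → V) : Prop :=
  ∀ (i : ℕ) (h : i + 1 < q), A (x ⟨i, Nat.lt_of_succ_lt h⟩) (x ⟨i + 1, h⟩)

/-- `R^{𝒜}`: the subspace of `R^{V^q}` of functions supported on allowed paths
(`q` is the number of vertices in the tuple, so this is `R^{𝒜_{q-1}}`). -/
def allowedSubmodule (R V : Type) [CommRing R] (A : V → V → Prop) (q : ℕ) :
    Submodule R ((Fin q → V) → R) where
  carrier := {f | ∀ x, ¬ IsAllowed A x → f x = 0}
  add_mem' := fun hf hg x hx => by simp only [Pi.add_apply, hf x hx, hg x hx, add_zero]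
  zero_mem' := fun x hx => rfl
  smul_mem' := fun c f hf x hx => by simp only [Pi.smul_apply, hf x hx, smul_zero]

/-- `Ω_p`, the space of invariant `p`-paths:
`Ω_p = {ω ∈ R^{𝒜_p} : ∂_[p] ω ∈ R^{𝒜_{p−1}}}`. -/
noncomputable def invariantPaths (R V : Type) [CommRing R] [Fintype V] [DecidableEq V]
    (A : V → V → Prop) (p : ℕ) : Submodule R ((Fin (p + 1) → V) → R) :=
  allowedSubmodule R V A (p + 1) ⊓ (allowedSubmodule R V A p).comap (pathBoundary R V p)

/-- The cycles `Z_p = ker ∂_p` of the path complex `(Ω_p, ∂_p)`, `∂_p = ∂_[p]|_{Ω_p}`.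
In degree `0` the complex ends at `Ω_0` (the differential out of `Ω_0` is zero),
so `Z_0 = Ω_0`. -/
noncomputable def pathCycles (R V : Type) [CommRing R] [Fintype V] [DecidableEq V]
    (A : V → V → Prop) : (p : ℕ) → Submodule R ((Fin (p + 1) → V) → R)
  | 0 => invariantPaths R V A 0
  | p + 1 => invariantPaths R V A (p + 1) ⊓ LinearMap.ker (pathBoundary R V (p + 1))

/-- The boundaries `B_p = im ∂_{p+1} = ∂_[p+1](Ω_{p+1})`. -/
noncomputable def pathBoundaries (R V : Type) [CommRing R] [Fintype V] [DecidableEq V]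
    (A : V → V → Prop) (p : ℕ) : Submodule R ((Fin (p + 1) → V) → R) :=
  Submodule.map (pathBoundary R V (p + 1)) (invariantPaths R V A (p + 1))

/-- The path homology `H_p = Z_p / B_p` of the digraph `(V, A)` with coefficients in `R`. -/
abbrev pathHomology (R V : Type) [CommRing R] [Fintype V] [DecidableEq V]
    (A : V → V → Prop) (p : ℕ) : Type :=
  pathCycles R V A p ⧸ (pathBoundaries R V A p).comap (pathCycles R V A p).subtype

/-- The Betti numbers `β_p = dim H_p`. -/
noncomputable def betti (F V : Type) [Field F] [Fintype V] [DecidableEq V]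
    (A : V → V → Prop) (p : ℕ) : ℕ :=
  Module.finrank F (pathHomology F V A p)

/-- The reduced Betti numbers `β̃_p = β_p − δ_{p0}` (as integers). -/
noncomputable def tildeBetti (F V : Type) [Field F] [Fintype V] [DecidableEq V]
    (A : V → V → Prop) (p : ℕ) : ℤ :=
  (betti F V A p : ℤ) - (if p = 0 then 1 else 0)

/-- For `n ≥ 1`, the `n`-uplinked mutual dyad `W_n` has vertex set `{a, b, 1, …, n}`
(realized as `Fin 2 ⊕ Fin n`, with `a = Sum.inl 0` and `b = Sum.inl 1`) and arc set
`{(a,b), (b,a)} ∪ {(a,i) : 1 ≤ i ≤ n} ∪ {(b,i) : 1 ≤ i ≤ n}`. -/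
def uplinkArc (n : ℕ) : (Fin 2 ⊕ Fin n) → (Fin 2 ⊕ Fin n) → Prop
  | Sum.inl i, Sum.inl j => i ≠ j
  | Sum.inl _, Sum.inr _ => True
  | Sum.inr _, _ => False

/-- The `n`-downlinked mutual dyad: the `n`-uplinked mutual dyad with all arcs reversed. -/
def downlinkArc (n : ℕ) (u v : Fin 2 ⊕ Fin n) : Prop := uplinkArc n v u

/-! ### Auxiliary lemmas -/

set_option linter.unusedSectionVars false

variable (R V : Type) [CommRing R] [Fintype V] [DecidableEq V]

/-- delta function -/
noncomputable def pdelta {q : ℕ} (x : Fin q → V) : (Fin q → V) → R :=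
  fun y => if y = x then 1 else 0

lemma pathBoundary_apply (p : ℕ) (f : (Fin (p+1) → V) → R) (w : Fin p → V) :
    pathBoundary R V p f w = ∑ x : Fin (p + 1) → V,
    (∑ j : Fin (p + 1), (-1 : R) ^ (j : ℕ) *
      (if (fun i => x (j.succAbove i)) = w then 1 else 0)) * f x := rfl

lemma pathBoundary_pdelta (p : ℕ) (x : Fin (p+1) → V) :
    pathBoundary R V p (pdelta R V x) =
      ∑ j : Fin (p + 1), ((-1 : R) ^ (j : ℕ)) • pdelta R V (fun i => x (j.succAbove i)) := by
  funext w
  rw [pathBoundary_apply]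
  rw [Finset.sum_eq_single x]
  · simp [pdelta, eq_comm]
  · intro y _ hy
    simp [pdelta, if_neg hy]
  · simp

lemma pdelta_mem_allowed {A : V → V → Prop} {q : ℕ} {x : Fin q → V} (hx : IsAllowed A x) :
    pdelta R V x ∈ allowedSubmodule R V A q := by
  intro y hy
  have : y ≠ x := fun h => hy (by rw [h]; exact hx)
  exact if_neg this

lemma betti_eq_zero_of_cycles_le {F : Type} [Field F] {A : V → V → Prop} {p : ℕ}
    (h : pathCycles F V A p ≤ pathBoundaries F V A p) : betti F V A p = 0 := by
  have ht : (pathBoundaries F V A p).comap (pathCycles F V A p).subtype = ⊤ :=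
    (Submodule.comap_subtype_eq_top).mpr h
  rw [betti]
  have : Subsingleton (pathHomology F V A p) := by
    rw [pathHomology, ht]
    exact Submodule.Quotient.subsingleton_iff.mpr rfl
  exact Module.finrank_zero_of_subsingleton

set_option linter.unusedSectionVars false

lemma succAbove_eq {q : ℕ} (j : Fin (q+1)) (k : Fin q) :
    j.succAbove k = if h : (k:ℕ) < (j:ℕ) then ⟨k, by omega⟩ else ⟨(k:ℕ)+1, by omega⟩ := by
  split_ifs with h
  · rw [Fin.succAbove_of_castSucc_lt j k (by simpa [Fin.lt_def] using h)]
    rfl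
  · rw [Fin.succAbove_of_le_castSucc j k (by simp [Fin.le_def]; omega)]
    rfl

lemma arc_out {n : ℕ} {u v : Fin 2 ⊕ Fin n} (h : uplinkArc n u v) : ∃ s, u = Sum.inl s := by
  cases u with
  | inl s => exact ⟨s, rfl⟩
  | inr i => cases v <;> exact h.elim

lemma arc_into_inl {n : ℕ} {u : Fin 2 ⊕ Fin n} {s : Fin 2} (h : uplinkArc n u (Sum.inl s)) :
    ∃ t, u = Sum.inl t ∧ t ≠ s := by
  cases u with
  | inl t => exact ⟨t, rfl, h⟩
  | inr i => exact h.elim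

lemma fin2_unique : ∀ s t t' : Fin 2, t ≠ s → t' ≠ s → t = t' := by decide

lemma not_arc_self {n : ℕ} (u : Fin 2 ⊕ Fin n) : ¬ uplinkArc n u u := by
  cases u with
  | inl s => exact fun h => h rfl
  | inr i => exact fun h => h

lemma succAbove_lt {q : ℕ} (j : Fin (q+1)) (m : ℕ) (hm : m < q) (h : m < (j:ℕ)) :
    j.succAbove ⟨m, hm⟩ = ⟨m, by omega⟩ := by
  rw [succAbove_eq]; exact dif_pos h

lemma succAbove_ge {q : ℕ} (j : Fin (q+1)) (m : ℕ) (hm : m < q) (h : (j:ℕ) ≤ m) :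
    j.succAbove ⟨m, hm⟩ = ⟨m+1, by omega⟩ := by
  rw [succAbove_eq]; exact dif_neg (Nat.not_lt.mpr h)

lemma uplink_inv_bot (F : Type) [Field F] (n p : ℕ) (hp : 3 ≤ p) :
    invariantPaths F (Fin 2 ⊕ Fin n) (uplinkArc n) p = ⊥ := by
  rw [eq_bot_iff]
  rintro ω ⟨h1, h2⟩
  rw [Submodule.mem_bot]
  funext x
  show ω x = 0
  by_cases hx : IsAllowed (uplinkArc n) x
  swap
  · exact h1 x hx
  obtain ⟨s0, hs0⟩ := arc_out (hx 0 (by omega))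
  obtain ⟨s1, hs1⟩ := arc_out (hx 1 (by omega))
  obtain ⟨s2, hs2⟩ := arc_out (hx 2 (by omega))
  have h01 : s0 ≠ s1 := by have := hx 0 (by omega); rw [hs0, hs1] at this; exact this
  have h12 : s1 ≠ s2 := by have := hx 1 (by omega); rw [hs1, hs2] at this; exact this
  have hs02 : s0 = s2 := fin2_unique s1 s0 s2 h01 (Ne.symm h12)
  have key : ∀ (x' : Fin (p+1) → (Fin 2 ⊕ Fin n)), IsAllowed (uplinkArc n) x' →
      ∀ j : Fin (p+1), (fun i => x' (j.succAbove i)) =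
        (fun i => x ((⟨1, by omega⟩ : Fin (p+1)).succAbove i)) →
      x' = x ∧ j = ⟨1, by omega⟩ := by
    intro x' hx' j he
    have heK : ∀ k : Fin p, x' (j.succAbove k) = x ((⟨1, by omega⟩ : Fin (p+1)).succAbove k) :=
      fun k => congrFun he k
    have w0 : x ((⟨1, by omega⟩ : Fin (p+1)).succAbove ⟨0, by omega⟩) = Sum.inl s0 := by
      rw [succAbove_lt _ 0 (by omega) (by exact Nat.one_pos)]; exact hs0
    have w1 : x ((⟨1, by omega⟩ : Fin (p+1)).succAbove ⟨1, by omega⟩) = Sum.inl s0 := by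
      rw [succAbove_ge _ 1 (by omega) (by exact le_refl 1)]; rw [hs02]; exact hs2
    rcases Nat.lt_or_ge (j:ℕ) 1 with hj | hj
    · -- j = 0
      exfalso
      have e0 := heK ⟨0, by omega⟩
      have e1 := heK ⟨1, by omega⟩
      rw [succAbove_ge j 0 (by omega) (by omega), w0] at e0
      rw [succAbove_ge j 1 (by omega) (by omega), w1] at e1
      have := hx' 1 (by omega)
      rw [e0, e1] at this
      exact not_arc_self _ this
    rcases Nat.lt_or_ge (j:ℕ) 2 with hj2 | hj2
    · -- j = 1
      have hjv : (j:ℕ) = 1 := by omega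
      have e0 := heK ⟨0, by omega⟩
      have e2 := heK ⟨1, by omega⟩
      rw [succAbove_lt j 0 (by omega) (by omega), succAbove_lt _ 0 (by omega) Nat.one_pos] at e0
      rw [succAbove_ge j 1 (by omega) (by omega), succAbove_ge _ 1 (by omega) (le_refl 1)] at e2
      rw [hs0] at e0
      -- e0 : x' ⟨0⟩ = inl s0 ; e2 : x' ⟨2⟩ = x ⟨2⟩
      have harc := hx' 1 (by omega)
      rw [e2, hs2] at harc
      obtain ⟨t, ht, hts⟩ := arc_into_inl harc
      have ht' : x' ⟨1, by omega⟩ = x ⟨1, by omega⟩ := by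
        rw [ht, hs1]
        exact congrArg Sum.inl (fin2_unique s2 t s1 hts h12)
      constructor
      · funext k
        rcases k with ⟨kv, hk⟩
        rcases Nat.lt_or_ge kv 1 with h0 | h0
        · have : kv = 0 := by omega
          subst this; rw [e0, hs0]
        rcases Nat.lt_or_ge kv 2 with hk1 | hk1
        · have : kv = 1 := by omega
          subst this; exact ht'
        · have e := heK ⟨kv - 1, by omega⟩
          rw [succAbove_ge j (kv-1) (by omega) (by omega),
              succAbove_ge _ (kv-1) (by omega) (show 1 ≤ kv - 1 by omega)] at e
          have hkv : kv - 1 + 1 = kv := by omega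
          simp only [hkv] at e
          exact e
      · exact Fin.ext hjv
    · -- j ≥ 2
      exfalso
      have e0 := heK ⟨0, by omega⟩
      have e1 := heK ⟨1, by omega⟩
      rw [succAbove_lt j 0 (by omega) (by omega), w0] at e0
      rw [succAbove_lt j 1 (by omega) (by omega), w1] at e1
      have := hx' 0 (by omega)
      rw [e0, e1] at this
      exact not_arc_self _ this
  -- the bad face w is not allowed
  have hwna : ¬ IsAllowed (uplinkArc n)
      (fun i => x ((⟨1, by omega⟩ : Fin (p+1)).succAbove i)) := by
    intro hc
    have := hc 0 (by omega)
    simp only at this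
    rw [succAbove_lt _ 0 (by omega) Nat.one_pos,
        succAbove_ge _ 1 (by omega) (le_refl 1), hs0, hs02, hs2] at this
    exact not_arc_self _ this
  have h2w := h2 _ hwna
  rw [pathBoundary_apply] at h2w
  rw [Finset.sum_eq_single_of_mem x (Finset.mem_univ x)
    (by
      intro y _ hy
      by_cases hy' : IsAllowed (uplinkArc n) y
      · refine mul_eq_zero_of_left (Finset.sum_eq_zero ?_) _
        intro j _
        rw [if_neg (fun hc => hy ((key y hy' j hc).1)), mul_zero]
      · rw [h1 y hy', mul_zero])] at h2w
  rw [Finset.sum_eq_single_of_mem (⟨1, by omega⟩ : Fin (p+1)) (Finset.mem_univ _)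
    (by
      intro j _ hj
      rw [if_neg (fun hc => hj ((key x hx j hc).2)), mul_zero])] at h2w
  rw [if_pos rfl] at h2w
  simpa using h2w

set_option linter.unusedSectionVars false

variable {R V : Type} [CommRing R] [Fintype V] [DecidableEq V]

lemma eta2 (x : Fin 2 → V) : x = ![x 0, x 1] := by
  funext i; fin_cases i <;> rfl

lemma eta1 (x : Fin 1 → V) : x = ![x 0] := by
  funext i; fin_cases i; rfl

lemma pair_eq {u v u' v' : V} : (![u, v] = ![u', v']) ↔ u = u' ∧ v = v' := by
  constructor
  · intro h
    exact ⟨congrFun h 0, congrFun h 1⟩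
  · rintro ⟨rfl, rfl⟩; rfl

lemma one_eq {u u' : V} : ((fun (_ : Fin 1) => u) = fun _ => u') ↔ u = u' := by
  constructor
  · intro h; exact congrFun h 0
  · rintro rfl; rfl

lemma boundary_pdelta2 (x : Fin 2 → V) :
    pathBoundary R V 1 (pdelta R V x) = pdelta R V ![x 1] - pdelta R V ![x 0] := by
  rw [pathBoundary_pdelta, Fin.sum_univ_two]
  have c0 : (fun i => x ((0 : Fin 2).succAbove i)) = ![x 1] := by
    funext i; fin_cases i <;> rfl
  have c1 : (fun i => x ((1 : Fin 2).succAbove i)) = ![x 0] := by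
    funext i; fin_cases i <;> rfl
  rw [c0, c1]
  simp [sub_eq_neg_add, add_comm]

lemma boundary_pdelta3 (x : Fin 3 → V) :
    pathBoundary R V 2 (pdelta R V x) =
      pdelta R V ![x 1, x 2] - pdelta R V ![x 0, x 2] + pdelta R V ![x 0, x 1] := by
  rw [pathBoundary_pdelta, Fin.sum_univ_three]
  have c0 : (fun i => x ((0 : Fin 3).succAbove i)) = ![x 1, x 2] := by
    funext i; fin_cases i <;> rfl
  have c1 : (fun i => x ((1 : Fin 3).succAbove i)) = ![x 0, x 2] := by
    funext i; fin_cases i <;> rfl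
  have c2 : (fun i => x ((2 : Fin 3).succAbove i)) = ![x 0, x 1] := by
    funext i; fin_cases i <;> rfl
  rw [c0, c1, c2]
  norm_num
  abel

lemma sum_fun1 (g : (Fin 1 → V) → R) :
    ∑ w : Fin 1 → V, g w = ∑ v : V, g (fun _ => v) := by
  apply Fintype.sum_equiv (Equiv.funUnique (Fin 1) V)
  intro w
  congr 1
  funext i
  exact congrArg w (Subsingleton.elim i 0)

lemma sum_fun2 (f : (Fin 2 → V) → R) :
    ∑ x : Fin 2 → V, f x = ∑ u : V, ∑ v : V, f ![u, v] := by
  calc ∑ x : Fin 2 → V, f x = ∑ p : V × V, f ![p.1, p.2] := by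
        apply Fintype.sum_equiv (piFinTwoEquiv (fun _ => V))
        intro x
        exact congrArg f (eta2 x)
    _ = ∑ u : V, ∑ v : V, f ![u, v] := Fintype.sum_prod_type _

set_option linter.unusedSectionVars false

lemma isAllowed_two {W : Type} {A : W → W → Prop} {x : Fin 2 → W} :
    IsAllowed A x ↔ A (x 0) (x 1) := by
  constructor
  · intro h; exact h 0 (by omega)
  · intro h i hi
    have hi0 : i = 0 := by omega
    subst hi0
    exact h

lemma isAllowed_three {W : Type} {A : W → W → Prop} {x : Fin 3 → W} :
    IsAllowed A x ↔ A (x 0) (x 1) ∧ A (x 1) (x 2) := by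
  constructor
  · intro h; exact ⟨h 0 (by omega), h 1 (by omega)⟩
  · rintro ⟨h1, h2⟩ i hi
    rcases Nat.lt_or_ge i 1 with h | h
    · have : i = 0 := by omega
      subst this; exact h1
    · have : i = 1 := by omega
      subst this; exact h2

variable {F : Type} [Field F] {n : ℕ}

lemma bd1_eval (ω : (Fin 2 → (Fin 2 ⊕ Fin n)) → F) (v : Fin 2 ⊕ Fin n) :
    pathBoundary F (Fin 2 ⊕ Fin n) 1 ω (fun _ => v) =
      (∑ u, ω ![u, v]) - (∑ u, ω ![v, u]) := by
  rw [pathBoundary_apply]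
  have hterm : ∀ x : Fin 2 → (Fin 2 ⊕ Fin n),
      (∑ j : Fin 2, (-1 : F) ^ (j : ℕ) *
        (if (fun i => x (j.succAbove i)) = (fun _ => v) then 1 else 0)) * ω x =
      (if x 1 = v then 1 else 0) * ω x - (if x 0 = v then 1 else 0) * ω x := by
    intro x
    rw [Fin.sum_univ_two]
    have c0 : (fun i => x ((0 : Fin 2).succAbove i)) = (fun _ : Fin 1 => x 1) :=
      funext (fun i => by fin_cases i; rfl)
    have c1 : (fun i => x ((1 : Fin 2).succAbove i)) = (fun _ : Fin 1 => x 0) :=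
      funext (fun i => by fin_cases i; rfl)
    rw [c0, c1, if_congr one_eq rfl rfl, if_congr one_eq rfl rfl]
    simp only [Fin.val_zero, Fin.val_one, pow_zero, pow_one]
    ring
  rw [Finset.sum_congr rfl (fun x _ => hterm x), Finset.sum_sub_distrib]
  congr 1
  · rw [sum_fun2 (fun x => (if x 1 = v then (1:F) else 0) * ω x)]
    have : ∀ u : Fin 2 ⊕ Fin n, ∑ w, (if (![u, w] : Fin 2 → _) 1 = v then (1:F) else 0) * ω ![u, w]
        = ω ![u, v] := by
      intro u
      simp [ite_mul, Finset.sum_ite_eq']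
    rw [Finset.sum_congr rfl (fun u _ => this u)]
  · rw [sum_fun2 (fun x => (if x 0 = v then (1:F) else 0) * ω x)]
    have : ∀ u : Fin 2 ⊕ Fin n, ∑ w, (if (![u, w] : Fin 2 → _) 0 = v then (1:F) else 0) * ω ![u, w]
        = (if u = v then 1 else 0) * ∑ w, ω ![u, w] := by
      intro u
      simp [ite_mul, Finset.mul_sum]
      by_cases h : u = v <;> simp [h]
    rw [Finset.sum_congr rfl (fun u _ => this u)]
    simp [ite_mul, Finset.sum_ite_eq']

lemma not_allowed_of_not_arc {u v : Fin 2 ⊕ Fin n} (h : ¬ uplinkArc n u v) :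
    ¬ IsAllowed (uplinkArc n) ![u, v] := fun hA => h (isAllowed_two.mp hA)

lemma cycles_le_boundaries (hn : 1 ≤ n) :
    pathCycles F (Fin 2 ⊕ Fin n) (uplinkArc n) 1 ≤
    pathBoundaries F (Fin 2 ⊕ Fin n) (uplinkArc n) 1 := by
  intro ω hω
  have hω' : ω ∈ invariantPaths F (Fin 2 ⊕ Fin n) (uplinkArc n) 1 ⊓
      LinearMap.ker (pathBoundary F (Fin 2 ⊕ Fin n) 1) := hω
  have h1 : ∀ x, ¬ IsAllowed (uplinkArc n) x → ω x = 0 := hω'.1.1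
  have hker : pathBoundary F (Fin 2 ⊕ Fin n) 1 ω = 0 := hω'.2
  have hno : ∀ (i : Fin n) (u : Fin 2 ⊕ Fin n), ω ![Sum.inr i, u] = 0 :=
    fun i u => h1 _ (not_allowed_of_not_arc (fun h => h))
  have haa : ω ![(Sum.inl 0 : Fin 2 ⊕ Fin n), Sum.inl 0] = 0 :=
    h1 _ (not_allowed_of_not_arc (fun h => h rfl))
  have hbb : ω ![(Sum.inl 1 : Fin 2 ⊕ Fin n), Sum.inl 1] = 0 :=
    h1 _ (not_allowed_of_not_arc (fun h => h rfl))
  have E : ∀ v, (∑ u, ω ![u, v]) - (∑ u, ω ![v, u]) = 0 := by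
    intro v
    have h0 : pathBoundary F (Fin 2 ⊕ Fin n) 1 ω (fun _ => v) = 0 := by rw [hker]; rfl
    rw [bd1_eval] at h0; exact h0
  have hsum : ∀ v, (∑ u, ω ![u, v]) =
      ω ![Sum.inl 0, v] + ω ![Sum.inl 1, v] := by
    intro v
    rw [Fintype.sum_sum_type, Fin.sum_univ_two]
    simp [hno]
  have Ebi : ∀ i : Fin n, ω ![Sum.inl 1, Sum.inr i] = - ω ![Sum.inl 0, Sum.inr i] := by
    intro i
    have hE := E (Sum.inr i)
    rw [hsum] at hE
    have h2' : (∑ u, ω ![Sum.inr i, u]) = 0 := Finset.sum_eq_zero (fun u _ => hno i u)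
    rw [h2'] at hE
    linear_combination hE
  have Eba : ω ![Sum.inl 1, Sum.inl 0] =
      ω ![Sum.inl 0, Sum.inl 1] + ∑ i, ω ![Sum.inl 0, Sum.inr i] := by
    have hE := E (Sum.inl 0)
    rw [hsum (Sum.inl 0)] at hE
    have hout : (∑ u, ω ![(Sum.inl 0 : Fin 2 ⊕ Fin n), u]) =
        ω ![Sum.inl 0, Sum.inl 0] + ω ![Sum.inl 0, Sum.inl 1] +
          ∑ i, ω ![Sum.inl 0, Sum.inr i] := by
      rw [Fintype.sum_sum_type, Fin.sum_univ_two]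
    rw [hout, haa] at hE
    linear_combination hE
  set t : Fin n → F := fun i => if i = ⟨0, hn⟩ then ω ![Sum.inl 0, Sum.inl 1] else 0 with ht
  set s : Fin n → F := fun i => t i + ω ![Sum.inl 0, Sum.inr i] with hs
  have hts : ∑ i, t i = ω ![Sum.inl 0, Sum.inl 1] := by
    rw [ht]; simp
  have hbd : pathBoundary F (Fin 2 ⊕ Fin n) 2
      (∑ i : Fin n, (t i • pdelta F _ ![Sum.inl 0, Sum.inl 1, Sum.inr i]
        + s i • pdelta F _ ![Sum.inl 1, Sum.inl 0, Sum.inr i])) = ω := by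
    rw [map_sum]
    have hterm : ∀ i : Fin n, pathBoundary F (Fin 2 ⊕ Fin n) 2
        (t i • pdelta F _ ![Sum.inl 0, Sum.inl 1, Sum.inr i]
          + s i • pdelta F _ ![Sum.inl 1, Sum.inl 0, Sum.inr i]) =
        t i • (pdelta F _ ![Sum.inl 1, Sum.inr i] - pdelta F _ ![Sum.inl 0, Sum.inr i]
              + pdelta F _ ![Sum.inl 0, Sum.inl 1])
        + s i • (pdelta F _ ![Sum.inl 0, Sum.inr i] - pdelta F _ ![Sum.inl 1, Sum.inr i]
              + pdelta F _ ![Sum.inl 1, Sum.inl 0]) := by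
      intro i
      rw [map_add, map_smul, map_smul, boundary_pdelta3, boundary_pdelta3]
      simp only [Matrix.cons_val_zero, Matrix.cons_val_one, Matrix.head_cons,
        Matrix.cons_val_two, Matrix.tail_cons]
    rw [Finset.sum_congr rfl (fun i _ => hterm i)]
    funext w
    obtain ⟨u, v, rfl⟩ : ∃ u v, w = ![u, v] := ⟨w 0, w 1, eta2 w⟩
    rw [Finset.sum_apply]
    simp only [Pi.add_apply, Pi.smul_apply, Pi.sub_apply, smul_eq_mul, pdelta]
    rcases u with su | iu
    · fin_cases su
      · rcases v with sv | iv
        · fin_cases sv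
          · -- (a,a)
            simp +decide [pair_eq]
            exact haa.symm
          · -- (a,b)
            simp +decide [pair_eq]
            exact hts
        · -- (a, i)
          simp +decide [pair_eq]
          rw [Finset.sum_add_distrib]
          simp [Finset.sum_ite_eq, hs]
      · rcases v with sv | iv
        · fin_cases sv
          · -- (b,a)
            simp +decide [pair_eq]
            simp only [hs]
            rw [Finset.sum_add_distrib, hts, Eba]
          · -- (b,b)
            simp +decide [pair_eq]
            exact hbb.symm
        · -- (b, i)
          simp +decide [pair_eq]
          rw [Finset.sum_add_distrib]
          simp [Finset.sum_ite_eq, hs, Ebi iv]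
    · -- (inr, v)
      simp +decide [pair_eq]
      exact (hno iu v).symm
  refine Submodule.mem_map.mpr
    ⟨∑ i : Fin n, (t i • pdelta F _ ![Sum.inl 0, Sum.inl 1, Sum.inr i]
        + s i • pdelta F _ ![Sum.inl 1, Sum.inl 0, Sum.inr i]),
      Submodule.mem_inf.mpr ⟨?_, ?_⟩, hbd⟩
  · exact Submodule.sum_mem _ (fun i _ => Submodule.add_mem _
      (Submodule.smul_mem _ _ (pdelta_mem_allowed F _
        (isAllowed_three.mpr ⟨(by decide : (0:Fin 2) ≠ (1:Fin 2)), trivial⟩)))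
      (Submodule.smul_mem _ _ (pdelta_mem_allowed F _
        (isAllowed_three.mpr ⟨(by decide : (1:Fin 2) ≠ (0:Fin 2)), trivial⟩))))
  · exact Submodule.mem_comap.mpr (by rw [hbd]; exact hω'.1.1)

set_option linter.unusedSectionVars false

variable {F : Type} [Field F] {n : ℕ}

lemma single_eq {V : Type} {u u' : V} : ((![u] : Fin 1 → V) = ![u']) ↔ u = u' := by
  constructor
  · intro h; exact congrFun h 0
  · rintro rfl; rfl

/-- the sum functional on 0-chains -/
noncomputable def sumL (F : Type) [Field F] (V : Type) [Fintype V] :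
    ((Fin 1 → V) → F) →ₗ[F] F where
  toFun g := ∑ w, g w
  map_add' f g := Finset.sum_add_distrib
  map_smul' r f := by simp [Finset.mul_sum]

lemma sum_fun1' {V : Type} [Fintype V] [DecidableEq V] (g : (Fin 1 → V) → F) :
    ∑ w : Fin 1 → V, g w = ∑ v : V, g ![v] := by
  rw [sum_fun1]
  exact Finset.sum_congr rfl (fun v _ =>
    congrArg g (funext (fun i => by fin_cases i; rfl)))

/-- chains whose boundary connects `a` to each vertex -/
noncomputable def chainW (F : Type) [Field F] (n : ℕ) :
    (Fin 2 ⊕ Fin n) → ((Fin 2 → (Fin 2 ⊕ Fin n)) → F)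
  | Sum.inl s => if s = 0 then 0 else pdelta F _ ![Sum.inl 0, Sum.inl 1]
  | Sum.inr i => pdelta F _ ![Sum.inl 0, Sum.inr i]

lemma chainW_mem : ∀ v, chainW F n v ∈ allowedSubmodule F (Fin 2 ⊕ Fin n) (uplinkArc n) 2 := by
  intro v
  cases v with
  | inl s =>
    by_cases h : s = 0
    · simp [chainW, h]
    · simp only [chainW, h, if_false]
      exact pdelta_mem_allowed F _ (isAllowed_two.mpr (by decide : (0 : Fin 2) ≠ 1))
  | inr i =>
    exact pdelta_mem_allowed F _ (isAllowed_two.mpr trivial)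

lemma boundary_chainW (v : Fin 2 ⊕ Fin n) :
    pathBoundary F (Fin 2 ⊕ Fin n) 1 (chainW F n v) =
      pdelta F _ ![v] - pdelta F _ ![Sum.inl 0] := by
  cases v with
  | inl s =>
    by_cases hs : s = 0
    · subst hs
      have h0 : chainW F n (Sum.inl (0 : Fin 2)) = 0 := by simp [chainW]
      rw [h0, map_zero, sub_self]
    · have hs1 : s = 1 := by omega
      subst hs1
      have h1 : chainW F n (Sum.inl (1 : Fin 2)) =
          pdelta F _ ![Sum.inl 0, Sum.inl 1] := by simp [chainW]
      rw [h1, boundary_pdelta2]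
      simp only [Matrix.cons_val_zero, Matrix.cons_val_one, Matrix.head_cons]
  | inr i =>
    show pathBoundary F (Fin 2 ⊕ Fin n) 1 (pdelta F _ ![Sum.inl 0, Sum.inr i]) = _
    rw [boundary_pdelta2]
    simp only [Matrix.cons_val_zero, Matrix.cons_val_one, Matrix.head_cons]

lemma allowed_one {V : Type} {A : V → V → Prop} (x : Fin 1 → V) : IsAllowed A x :=
  fun i hi => absurd hi (by omega)

lemma allowed_zero {V : Type} {A : V → V → Prop} (x : Fin 0 → V) : IsAllowed A x :=
  fun i hi => absurd hi (by omega)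

lemma mem_allowed_one {V : Type} [Fintype V] [DecidableEq V] {A : V → V → Prop}
    (f : (Fin 1 → V) → F) : f ∈ allowedSubmodule F V A 1 :=
  fun x hx => absurd (allowed_one x) hx

lemma boundaries_zero_eq (n : ℕ) :
    pathBoundaries F (Fin 2 ⊕ Fin n) (uplinkArc n) 0 =
      LinearMap.ker (sumL F (Fin 2 ⊕ Fin n)) := by
  apply le_antisymm
  · rintro g ⟨η, hη, rfl⟩
    rw [LinearMap.mem_ker]
    show ∑ w, pathBoundary F (Fin 2 ⊕ Fin n) 1 η w = 0
    have : ∀ w, pathBoundary F (Fin 2 ⊕ Fin n) 1 η w =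
        ∑ x : Fin 2 → (Fin 2 ⊕ Fin n),
          (∑ j : Fin 2, (-1 : F) ^ (j : ℕ) *
            (if (fun i => x (j.succAbove i)) = w then 1 else 0)) * η x := fun w => rfl
    rw [Finset.sum_congr rfl (fun w _ => this w), Finset.sum_comm]
    apply Finset.sum_eq_zero
    intro x _
    rw [← Finset.sum_mul]
    apply mul_eq_zero_of_left
    rw [Finset.sum_comm]
    have : ∀ j : Fin 2, ∑ w : Fin 1 → (Fin 2 ⊕ Fin n),
        (-1 : F) ^ (j : ℕ) * (if (fun i => x (j.succAbove i)) = w then 1 else 0) =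
        (-1 : F) ^ (j : ℕ) := by
      intro j
      rw [← Finset.mul_sum]
      rw [Finset.sum_ite_eq univ (fun i => x (j.succAbove i)) (fun _ => (1:F))]
      simp
    rw [Finset.sum_congr rfl (fun j _ => this j), Fin.sum_univ_two]
    simp
  · intro g hg
    rw [LinearMap.mem_ker] at hg
    have hg' : ∑ v : Fin 2 ⊕ Fin n, g ![v] = 0 := by
      rw [← sum_fun1']; exact hg
    refine Submodule.mem_map.mpr
      ⟨∑ v : Fin 2 ⊕ Fin n, g ![v] • chainW F n v, ⟨?_, ?_⟩, ?_⟩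
    · exact Submodule.sum_mem _ (fun v _ => Submodule.smul_mem _ _ (chainW_mem v))
    · exact Submodule.mem_comap.mpr (mem_allowed_one _)
    · rw [map_sum]
      have : ∀ v, pathBoundary F (Fin 2 ⊕ Fin n) 1 (g ![v] • chainW F n v) =
          g ![v] • (pdelta F _ ![v] - pdelta F _ ![Sum.inl 0]) := by
        intro v; rw [map_smul, boundary_chainW]
      rw [Finset.sum_congr rfl (fun v _ => this v)]
      funext w
      rw [Finset.sum_apply]
      have hcond : ∀ v : Fin 2 ⊕ Fin n, (w = ![v]) ↔ (w 0 = v) :=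
        fun v => ⟨fun h => congrFun h 0, fun h => funext (fun i => by fin_cases i; exact h)⟩
      have hterm : ∀ v, (g ![v] • (pdelta F _ ![v] - pdelta F _ ![(Sum.inl 0 : Fin 2 ⊕ Fin n)])) w
          = g ![v] * (if w 0 = v then 1 else 0) - g ![v] * (if w = ![Sum.inl 0] then 1 else 0) := by
        intro v
        simp only [Pi.smul_apply, Pi.sub_apply, smul_eq_mul, pdelta, mul_sub]
        rw [if_congr (hcond v) rfl rfl]
      rw [Finset.sum_congr rfl (fun v _ => hterm v), Finset.sum_sub_distrib]
      rw [← Finset.sum_mul, hg', zero_mul, sub_zero]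
      simp only [mul_ite, mul_one, mul_zero]
      rw [Finset.sum_ite_eq univ (w 0) (fun v => g ![v])]
      simp only [Finset.mem_univ, if_true]
      exact (congrArg g (eta1 w)).symm

lemma cycles_zero_eq (n : ℕ) :
    pathCycles F (Fin 2 ⊕ Fin n) (uplinkArc n) 0 = ⊤ := by
  rw [eq_top_iff]
  intro f _
  refine Submodule.mem_inf.mpr ⟨fun x hx => absurd (allowed_one x) hx, ?_⟩
  exact Submodule.mem_comap.mpr (fun x hx => absurd (allowed_zero x) hx)

lemma sumL_surj : Function.Surjective (sumL F (Fin 2 ⊕ Fin n)) := by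
  intro c
  refine ⟨c • pdelta F _ ![Sum.inl 0], ?_⟩
  show ∑ w, (c • pdelta F (Fin 2 ⊕ Fin n) ![Sum.inl 0]) w = c
  simp only [Pi.smul_apply, smul_eq_mul, pdelta, mul_ite, mul_one, mul_zero]
  rw [Finset.sum_ite_eq' univ (![Sum.inl 0] : Fin 1 → Fin 2 ⊕ Fin n) (fun _ => c)]
  simp

set_option synthInstance.maxHeartbeats 1000000 in
set_option maxHeartbeats 1000000 in
lemma betti_zero_eq_one (n : ℕ) : betti F (Fin 2 ⊕ Fin n) (uplinkArc n) 0 = 1 := by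
  classical
  have hZ := cycles_zero_eq (F := F) n
  have hB := boundaries_zero_eq (F := F) n
  -- finrank of ambient space
  have hamb : Module.finrank F ((Fin 1 → (Fin 2 ⊕ Fin n)) → F) = n + 2 := by
    rw [Module.finrank_fintype_fun_eq_card]
    simp [Fintype.card_fun]
    omega
  have hker : Module.finrank F ↥(LinearMap.ker (sumL F (Fin 2 ⊕ Fin n))) = n + 1 := by
    have h1 := LinearMap.finrank_range_add_finrank_ker (sumL F (Fin 2 ⊕ Fin n))
    rw [LinearMap.range_eq_top.mpr sumL_surj, finrank_top, Module.finrank_self, hamb] at h1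
    omega
  have hle : pathBoundaries F (Fin 2 ⊕ Fin n) (uplinkArc n) 0 ≤
      pathCycles F (Fin 2 ⊕ Fin n) (uplinkArc n) 0 := by rw [hZ]; exact le_top
  have hcomap : Module.finrank F
      ↥((pathBoundaries F (Fin 2 ⊕ Fin n) (uplinkArc n) 0).comap
        (pathCycles F (Fin 2 ⊕ Fin n) (uplinkArc n) 0).subtype) = n + 1 := by
    rw [LinearEquiv.finrank_eq (Submodule.comapSubtypeEquivOfLe hle), hB, hker]
  have hZr : Module.finrank F ↥(pathCycles F (Fin 2 ⊕ Fin n) (uplinkArc n) 0) = n + 2 := by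
    rw [hZ, finrank_top, hamb]
  have hq := Submodule.finrank_quotient_add_finrank
    ((pathBoundaries F (Fin 2 ⊕ Fin n) (uplinkArc n) 0).comap
      (pathCycles F (Fin 2 ⊕ Fin n) (uplinkArc n) 0).subtype)
  rw [hcomap, hZr] at hq
  have : betti F (Fin 2 ⊕ Fin n) (uplinkArc n) 0 + (n+1) = n + 2 := hq
  omega

/-- For `n ≥ 1` and `W_n` the `n`-uplinked mutual dyad, the reduced path
homology of `W_n` over any field vanishes in every dimension `p ≥ 0` with `p ≠ 2`:
`β̃_0(W_n) = β̃_1(W_n) = 0` and `β̃_p(W_n) = 0` for all `p ≥ 3`. -/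
theorem uplinked_dyad_tildeBetti_ne_two (F : Type) [Field F] (n : ℕ) (hn : 1 ≤ n) :
    tildeBetti F (Fin 2 ⊕ Fin n) (uplinkArc n) 0 = 0
    ∧ tildeBetti F (Fin 2 ⊕ Fin n) (uplinkArc n) 1 = 0
    ∧ ∀ p : ℕ, 3 ≤ p → tildeBetti F (Fin 2 ⊕ Fin n) (uplinkArc n) p = 0 := by
  refine ⟨?_, ?_, ?_⟩
  · rw [tildeBetti, betti_zero_eq_one n]
    simp
  · rw [tildeBetti, betti_eq_zero_of_cycles_le _ (cycles_le_boundaries hn)]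
    simp
  · intro p hp
    obtain ⟨k, rfl⟩ : ∃ k, p = k + 1 := ⟨p - 1, by omega⟩
    have hbot : pathCycles F (Fin 2 ⊕ Fin n) (uplinkArc n) (k + 1) = ⊥ := by
      have : pathCycles F (Fin 2 ⊕ Fin n) (uplinkArc n) (k + 1) =
          invariantPaths F (Fin 2 ⊕ Fin n) (uplinkArc n) (k + 1) ⊓
            LinearMap.ker (pathBoundary F (Fin 2 ⊕ Fin n) (k + 1)) := rfl
      rw [this, uplink_inv_bot F n (k + 1) (by omega), bot_inf_eq]
    rw [tildeBetti, betti_eq_zero_of_cycles_le _ (by rw [hbot]; exact bot_le)]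
    simp
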